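/- Let q, r ∈ ℝ with q ≠ 0 and r ≠ 1, and let C ⊆ ℂ be the circle having the line segment from r to f_q(r) as a diameter (a single point if r = f_q(r)). Then 1 ∉ C and f_q maps C onto itself: f_q(C) = C. -/

import Mathlib

noncomputable section

/-- The Möbius transformation `f_q(y) = 1 + q/(y-1)`. -/
def fq (q y : ℂ) : ℂ := 1 + q / (y - 1)

/-- **Theorem.** For real `q ≠ 0` and real `r ≠ 1`, the circle `C` having the segment
from `r` to `f_q(r)` as a diameter (a single point if `r = f_q(r)`) avoids `1` and is
mapped onto itself by `f_q`. -/
theorem circle_on_diameter_fq_invariant (q r : ℝ) (hq : q ≠ 0) (hr : r ≠ 1)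
    (C : Set ℂ)
    (hC : C = Metric.sphere (((r : ℂ) + fq (q : ℂ) (r : ℂ)) / 2)
      (‖(r : ℂ) - fq (q : ℂ) (r : ℂ)‖ / 2)) :
    (1 : ℂ) ∉ C ∧ fq (q : ℂ) '' C = C := by
  have hs : r - 1 ≠ 0 := sub_ne_zero.mpr hr
  set fr : ℝ := 1 + q / (r - 1) with hfr
  have hfq : fq (q:ℂ) (r:ℂ) = ((fr : ℝ) : ℂ) := by
    rw [hfr]; unfold fq; push_cast; ring
  set a : ℝ := (r + fr) / 2 with ha
  set ρ : ℝ := |r - fr| / 2 with hρ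
  have hρ0 : 0 ≤ ρ := by positivity
  have hρsq : ρ ^ 2 = (r - fr) ^ 2 / 4 := by
    rw [hρ]; rw [div_pow, sq_abs]; norm_num
  have hkey : (a - 1) ^ 2 - ρ ^ 2 = q := by
    rw [hρsq, ha, hfr]; field_simp; ring
  -- membership characterization
  have hmem : ∀ y : ℂ, y ∈ C ↔ (y.re - a) ^ 2 + y.im ^ 2 = ρ ^ 2 := by
    intro y
    have hcenter : ((r : ℂ) + fq (q : ℂ) (r : ℂ)) / 2 = ((a : ℝ) : ℂ) := by
      rw [hfq, ha]; push_cast; ring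
    have hrad : ‖(r : ℂ) - fq (q : ℂ) (r : ℂ)‖ / 2 = ρ := by
      rw [hfq, hρ, ← Complex.ofReal_sub, Complex.norm_real, Real.norm_eq_abs]
    rw [hC, hcenter, hrad, Metric.mem_sphere, Complex.dist_eq]
    constructor
    · intro h
      have := congrArg (· ^ 2) h
      simp only [Complex.sq_norm] at this
      rw [Complex.normSq_apply] at this
      simp only [Complex.sub_re, Complex.sub_im, Complex.ofReal_re,
        Complex.ofReal_im] at this
      nlinarith [this]
    · intro h
      rw [Complex.norm_def, Complex.normSq_apply]
      simp only [Complex.sub_re, Complex.sub_im, Complex.ofReal_re,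
        Complex.ofReal_im, sub_zero]
      rw [show (y.re - a) * (y.re - a) + y.im * y.im = ρ ^ 2 by nlinarith [h]]
      exact Real.sqrt_sq hρ0
  have h1 : (1 : ℂ) ∉ C := by
    intro h
    rw [hmem] at h
    simp only [Complex.one_re, Complex.one_im] at h
    apply hq
    nlinarith [h, hkey]
  have hmap : ∀ y ∈ C, fq (q : ℂ) y ∈ C := by
    intro y hy
    have hy1 : y ≠ 1 := by rintro rfl; exact h1 hy
    have hw : y - 1 ≠ 0 := sub_ne_zero.mpr hy1
    have hn : Complex.normSq (y - 1) ≠ 0 := by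
      simpa using hw
    set u : ℝ := y.re - 1 with hu
    set v : ℝ := y.im with hv
    have hnval : Complex.normSq (y - 1) = u ^ 2 + v ^ 2 := by
      rw [Complex.normSq_apply]
      simp only [Complex.sub_re, Complex.sub_im, Complex.one_re, Complex.one_im]
      ring
    have hn' : u ^ 2 + v ^ 2 ≠ 0 := by rw [← hnval]; exact hn
    have hre : (fq (q : ℂ) y).re = 1 + q * u / (u ^ 2 + v ^ 2) := by
      unfold fq
      rw [Complex.add_re, Complex.one_re, Complex.div_re, hnval]
      simp only [Complex.ofReal_re, Complex.ofReal_im, Complex.sub_re,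
        Complex.sub_im, Complex.one_re, Complex.one_im]
      ring_nf
      rw [hu]; ring
    have him : (fq (q : ℂ) y).im = -(q * v) / (u ^ 2 + v ^ 2) := by
      unfold fq
      rw [Complex.add_im, Complex.one_im, Complex.div_im, hnval]
      simp only [Complex.ofReal_re, Complex.ofReal_im, Complex.sub_re,
        Complex.sub_im, Complex.one_re, Complex.one_im]
      ring_nf
      rw [hv]; ring
    rw [hmem] at hy ⊢
    rw [hre, him]
    have hy' : (u - (a - 1)) ^ 2 + v ^ 2 = ρ ^ 2 := by
      rw [← hy]; ring
    field_simp
    linear_combination (q * (u ^ 2 + v ^ 2)) * hy' +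
      ((u ^ 2 + v ^ 2) ^ 2 - q * (u ^ 2 + v ^ 2)) * hkey
  refine ⟨h1, ?_⟩
  ext z
  constructor
  · rintro ⟨y, hy, rfl⟩
    exact hmap y hy
  · intro hz
    have hz1 : z ≠ 1 := by rintro rfl; exact h1 hz
    have hw : z - 1 ≠ 0 := sub_ne_zero.mpr hz1
    refine ⟨fq (q : ℂ) z, hmap z hz, ?_⟩
    unfold fq
    have hq' : (q : ℂ) ≠ 0 := by exact_mod_cast hq
    field_simp
    rw [show z - 1 + (q : ℂ) - (z - 1) = q by ring, mul_div_cancel_left₀ _ hq']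
    ring
end
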